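/- Realizability by a GUM. Let n ≥ 1, let F be a real n×n matrix, H a real 1×n matrix, N a real n×1 matrix, r₀ ∈ ℝ, and let P be a positive definite real n×n matrix such that the block matrix [[Q(P), S(P)], [S(P)ᵀ, R(P)]] is positive semidefinite and R(P) > 0. Define a = F − R(P)⁻¹ S(P) H, b = H, c = R(P)⁻¹ S(P), β = R(P), α = Q(P) − R(P)⁻¹ S(P) S(P)ᵀ, and η = P. Then: (i) α is positive semidefinite; (ii) a + cb = F; (iii) η = (α + β c cᵀ) + (a + cb) η (a + cb)ᵀ; (iv) β + b η bᵀ = r₀; (v) a η bᵀ + c (β + b η bᵀ) = N; and consequently b (a + cb)^{k−1} (a η bᵀ + c (β + b η bᵀ)) = H F^{k−1} N for all k ≥ 1. -/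

import Mathlib

open Matrix

lemma one_by_one_eq_smul_one (M : Matrix (Fin 1) (Fin 1) ℝ) :
    M = (M 0 0) • (1 : Matrix (Fin 1) (Fin 1) ℝ) := by
  ext i j
  rw [Subsingleton.elim i 0, Subsingleton.elim j 0]
  simp

lemma mul_one_by_one {n : ℕ} (X : Matrix (Fin n) (Fin 1) ℝ)
    (M : Matrix (Fin 1) (Fin 1) ℝ) : X * M = (M 0 0) • X := by
  nth_rewrite 1 [one_by_one_eq_smul_one M]
  rw [Matrix.mul_smul, Matrix.mul_one]

/-- **realizability by a GUM.** Given a positive definite `P`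
such that the block matrix `[[Q(P), S(P)], [S(P)ᵀ, R(P)]]` is positive
semidefinite and `R(P) > 0`, the parameters `a = F - R⁻¹ S H`, `b = H`,
`c = R⁻¹ S`, `β = R`, `α = Q - R⁻¹ S Sᵀ`, `η = P` define a stationary linear
Gaussian GUM realizing `r₀` at lag `0` and `H F^(k-1) N` at lag `k ≥ 1`. -/
theorem stmt_11 {n : ℕ} (hn : 1 ≤ n)
    (F : Matrix (Fin n) (Fin n) ℝ) (H : Matrix (Fin 1) (Fin n) ℝ)
    (N : Matrix (Fin n) (Fin 1) ℝ) (r0 : ℝ)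
    (P : Matrix (Fin n) (Fin n) ℝ) (hP : P.PosDef)
    (hblk : (Matrix.fromBlocks (P - F * P * Fᵀ) (N - F * P * Hᵀ)
        (N - F * P * Hᵀ)ᵀ
        (r0 • (1 : Matrix (Fin 1) (Fin 1) ℝ) - H * P * Hᵀ)).PosSemidef)
    (hR : 0 < r0 - (H * P * Hᵀ) 0 0)
    (a : Matrix (Fin n) (Fin n) ℝ) (b : Matrix (Fin 1) (Fin n) ℝ)
    (c : Matrix (Fin n) (Fin 1) ℝ) (β : ℝ) (α η : Matrix (Fin n) (Fin n) ℝ)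
    (ha : a = F - (r0 - (H * P * Hᵀ) 0 0)⁻¹ • ((N - F * P * Hᵀ) * H))
    (hb : b = H)
    (hc : c = (r0 - (H * P * Hᵀ) 0 0)⁻¹ • (N - F * P * Hᵀ))
    (hβ : β = r0 - (H * P * Hᵀ) 0 0)
    (hα : α = (P - F * P * Fᵀ) -
      (r0 - (H * P * Hᵀ) 0 0)⁻¹ • ((N - F * P * Hᵀ) * (N - F * P * Hᵀ)ᵀ))
    (hη : η = P) :
    α.PosSemidef ∧
    a + c * b = F ∧
    η = (α + β • (c * cᵀ)) + (a + c * b) * η * (a + c * b)ᵀ ∧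
    β + (b * η * bᵀ) 0 0 = r0 ∧
    a * η * bᵀ + (β + (b * η * bᵀ) 0 0) • c = N ∧
    ∀ k : ℕ, 1 ≤ k →
      (b * (a + c * b) ^ (k - 1) *
          (a * η * bᵀ + (β + (b * η * bᵀ) 0 0) • c)) 0 0 =
        (H * F ^ (k - 1) * N) 0 0 := by
  set R : ℝ := r0 - (H * P * Hᵀ) 0 0 with hRdef
  have hR0 : R ≠ 0 := ne_of_gt hR
  set S : Matrix (Fin n) (Fin 1) ℝ := N - F * P * Hᵀ with hSdef
  set Q : Matrix (Fin n) (Fin n) ℝ := P - F * P * Fᵀ with hQdef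
  set D : Matrix (Fin 1) (Fin 1) ℝ := r0 • (1 : Matrix (Fin 1) (Fin 1) ℝ) - H * P * Hᵀ with hDdef
  have hD00 : D 0 0 = R := by simp [hDdef, hRdef]
  have hDR : D = R • (1 : Matrix (Fin 1) (Fin 1) ℝ) := by
    rw [one_by_one_eq_smul_one D, hD00]
  -- (ii)
  have hii : a + c * b = F := by
    rw [ha, hb, hc, Matrix.smul_mul]
    abel
  -- key scalar fact
  have hRinv : R⁻¹ * R = 1 := inv_mul_cancel₀ hR0
  -- (i)
  have hi : α.PosSemidef := by
    have hDpos : D.PosDef := by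
      rw [hDR, posDef_iff_dotProduct_mulVec]
      refine ⟨?_, fun x hx => ?_⟩
      · ext i j
        simp [Matrix.conjTranspose_apply, Matrix.one_apply, eq_comm]
      · rw [smul_mulVec, one_mulVec, dotProduct_smul, smul_eq_mul]
        refine mul_pos hR ?_
        have : (0:ℝ) < star x ⬝ᵥ x := by
          simpa using dotProduct_star_self_pos_iff.mpr hx
        simpa using this
    have hDinv : D⁻¹ = R⁻¹ • (1 : Matrix (Fin 1) (Fin 1) ℝ) := by
      apply Matrix.inv_eq_right_inv
      rw [hDR, smul_mul_smul_comm, Matrix.one_mul, mul_inv_cancel₀ hR0, one_smul]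
    have hinst : Invertible D := hDpos.isUnit.invertible
    have hherm : Sᴴ = Sᵀ := by
      ext i j; simp [Matrix.conjTranspose_apply]
    have := (Matrix.PosDef.fromBlocks₂₂ (R' := ℝ) Q S hDpos (D := D)).mp ?_
    · have heq : Q - S * D⁻¹ * Sᴴ = α := by
        rw [hα, hDinv, hherm, Matrix.mul_smul, Matrix.mul_one, Matrix.smul_mul]
      rwa [heq] at this
    · rwa [hherm]
  have hiv : β + (b * η * bᵀ) 0 0 = r0 := by rw [hβ, hb, hη]; ring
  have hv : a * η * bᵀ + (β + (b * η * bᵀ) 0 0) • c = N := by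
    rw [hiv, ha, hb, hη, hc, Matrix.sub_mul, Matrix.sub_mul, Matrix.smul_mul, Matrix.smul_mul,
      Matrix.mul_assoc (S * H) P Hᵀ, Matrix.mul_assoc S H (P * Hᵀ), ← Matrix.mul_assoc H P Hᵀ,
      mul_one_by_one S (H * P * Hᵀ), smul_smul, smul_smul]
    have hsc : r0 * R⁻¹ - R⁻¹ * (H * P * Hᵀ) 0 0 = 1 := by
      have h2 : r0 * R⁻¹ - R⁻¹ * (H * P * Hᵀ) 0 0 = R⁻¹ * R := by rw [hRdef]; ring
      rw [h2, hRinv]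
    rw [show F * P * Hᵀ - (R⁻¹ * (H * P * Hᵀ) 0 0) • S + (r0 * R⁻¹) • S
        = F * P * Hᵀ + ((r0 * R⁻¹) • S - (R⁻¹ * (H * P * Hᵀ) 0 0) • S) by abel,
      ← sub_smul, hsc, one_smul, hSdef]
    abel
  refine ⟨hi, hii, ?_, hiv, hv, ?_⟩
  -- (iii)
  · rw [hii, hη, hα, hβ, hc, Matrix.transpose_smul, Matrix.smul_mul, Matrix.mul_smul,
      smul_smul, smul_smul]
    have hs : R * R⁻¹ * R⁻¹ = R⁻¹ := by field_simp
    rw [hs, hQdef]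
    abel
  -- (vi)
  · intro k hk
    rw [hv, hii, hb]
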